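/- Define the integer sequence (c_k)_{k≥0} by c_{2k} = (−1)^k C_k (where C_k is the k-th Catalan number) and c_{2k+1} = 0. Then for every n ≥ 1 and every prime p, the determinant of the n×n Hankel matrix with entries c_{i+j} (0 ≤ i,j < n) is not divisible by p; consequently this determinant equals ±1. -/

import Mathlib

/-- c_{2k} = (-1)^k C_k (Catalan), c_{2k+1} = 0. -/
def cseq (k : ℕ) : ℤ :=
  if k % 2 = 0 then (-1) ^ (k / 2) * (catalan (k / 2) : ℤ) else 0

/-- ballot numbers: paths of length i from 0 to k staying ≥ 0 -/
def bz : ℕ → ℕ → ℤ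
  | 0, k => if k = 0 then 1 else 0
  | i+1, k => (if k = 0 then 0 else bz i (k-1)) + bz i (k+1)

lemma bz_eq_zero_of_lt : ∀ i k : ℕ, i < k → bz i k = 0 := by
  intro i
  induction i with
  | zero => intro k hk; simp only [bz]; rw [if_neg (by omega)]
  | succ i ih =>
    intro k hk
    have h1 : k ≠ 0 := by omega
    rw [bz, if_neg h1, ih (k-1) (by omega), ih (k+1) (by omega)]
    ring

lemma bz_parity : ∀ i k : ℕ, (i + k) % 2 = 1 → bz i k = 0 := by
  intro i
  induction i with
  | zero => intro k hk; simp [bz]; omega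
  | succ i ih =>
    intro k hk
    rcases Nat.eq_zero_or_pos k with h | h
    · subst h
      rw [bz, if_pos rfl, ih 1 (by omega)]; ring
    · rw [bz, if_neg (by omega), ih (k-1) (by omega), ih (k+1) (by omega)]; ring

lemma bz_closed : ∀ i k : ℕ, (i + k) % 2 = 0 →
    bz i k = (Nat.choose i ((i+k)/2) : ℤ) - (Nat.choose i ((i+k)/2 + 1) : ℤ) := by
  intro i
  induction i with
  | zero =>
    intro k hk
    rcases Nat.eq_zero_or_pos k with h | h
    · subst h; simp [bz]
    · have h2 : k / 2 ≠ 0 := by omega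
      rw [bz, if_neg (by omega), Nat.choose_eq_zero_of_lt (by omega),
        Nat.choose_eq_zero_of_lt (by omega)]
      simp
  | succ i ih =>
    intro k hk
    obtain ⟨m, hm⟩ : ∃ m, i + 1 + k = 2 * m := ⟨(i+1+k)/2, by omega⟩
    rcases Nat.eq_zero_or_pos k with h | h
    · -- k = 0, i odd, i = 2m - 1
      subst h
      have hm1 : 1 ≤ m := by omega
      simp only [Nat.add_zero]
      rw [bz, if_pos rfl, ih 1 (by omega)]
      have e1 : (i + 1) / 2 = m := by omega
      rw [e1]
      have sym : Nat.choose i (m - 1) = Nat.choose i m := by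
        have : i - m = m - 1 := by omega
        rw [← this, Nat.choose_symm (by omega)]
      have p1 : Nat.choose (i+1) m = Nat.choose i (m-1) + Nat.choose i m := by
        have : m = (m - 1) + 1 := by omega
        rw [this, Nat.choose_succ_succ']
        congr 1 <;> congr 1 <;> omega
      have p2 : Nat.choose (i+1) (m+1) = Nat.choose i m + Nat.choose i (m+1) :=
        Nat.choose_succ_succ' i m ▸ by rw [Nat.choose_succ_succ']
      rw [p1, p2, sym]
      push_cast
      ring
    · -- k ≥ 1
      rw [bz, if_neg (by omega), ih (k-1) (by omega), ih (k+1) (by omega)]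
      have e1 : (i + (k-1)) / 2 = m - 1 := by omega
      have e2 : (i + (k+1)) / 2 = m := by omega
      have e3 : (i + 1 + k) / 2 = m := by omega
      have e4 : m - 1 + 1 = m := by omega
      rw [e1, e2, e3, e4]
      have p1 : Nat.choose (i+1) m = Nat.choose i (m-1) + Nat.choose i m := by
        have : m = (m - 1) + 1 := by omega
        rw [this, Nat.choose_succ_succ']
        congr 2 <;> omega
      have p2 : Nat.choose (i+1) (m+1) = Nat.choose i m + Nat.choose i (m+1) := by
        rw [Nat.choose_succ_succ']
      rw [p1, p2]
      push_cast
      ring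

lemma bz_diag (i : ℕ) : bz i i = 1 := by
  rw [bz_closed i i (by omega)]
  have : (i + i) / 2 = i := by omega
  rw [this, Nat.choose_self, Nat.choose_eq_zero_of_lt (by omega)]
  simp

lemma bz_catalan (k : ℕ) : bz (2*k) 0 = (catalan k : ℤ) := by
  rw [bz_closed (2*k) 0 (by omega)]
  have e : (2*k + 0)/2 = k := by omega
  rw [e]
  have key : ((k:ℤ) + 1) * ((Nat.choose (2*k) k : ℤ) - (Nat.choose (2*k) (k+1) : ℤ))
      = ((k:ℤ)+1) * (catalan k : ℤ) := by
    have h1 : Nat.choose (2*k) (k+1) * (k+1) = Nat.choose (2*k) k * k := by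
      rw [Nat.choose_succ_right_eq]; congr 1; omega
    have h2 : (k + 1) * catalan k = Nat.centralBinom k := succ_mul_catalan_eq_centralBinom k
    have h3 : Nat.centralBinom k = Nat.choose (2*k) k := rfl
    have h1' : ((Nat.choose (2*k) (k+1) : ℤ)) * ((k:ℤ)+1) = (Nat.choose (2*k) k : ℤ) * k := by
      exact_mod_cast congrArg (Nat.cast : ℕ → ℤ) h1
    have h2' : ((k:ℤ) + 1) * (catalan k : ℤ) = (Nat.choose (2*k) k : ℤ) := by
      exact_mod_cast congrArg (Nat.cast : ℕ → ℤ) (h2.trans h3)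
    rw [h2']
    linarith [h1']
  have hne : ((k:ℤ) + 1) ≠ 0 := by positivity
  exact mul_left_cancel₀ hne key

open Finset in
lemma bz_shift (i j N : ℕ) (hi : i < N) (hj : j < N) :
    ∑ k ∈ range N, bz (i+1) k * bz j k = ∑ k ∈ range N, bz i k * bz (j+1) k := by
  obtain ⟨M, rfl⟩ : ∃ M, N = M + 1 := ⟨N - 1, by omega⟩
  have expandL : ∀ k, bz (i+1) k * bz j k
      = (if k = 0 then 0 else bz i (k-1)) * bz j k + bz i (k+1) * bz j k := by
    intro k; rw [bz]; ring
  have expandR : ∀ k, bz i k * bz (j+1) k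
      = bz i k * (if k = 0 then 0 else bz j (k-1)) + bz i k * bz j (k+1) := by
    intro k; rw [bz]; ring
  simp only [expandL, expandR, Finset.sum_add_distrib]
  have A : ∑ k ∈ range (M+1), (if k = 0 then 0 else bz i (k-1)) * bz j k
      = ∑ k ∈ range M, bz i k * bz j (k+1) := by
    rw [Finset.sum_range_succ']
    simp
  have B : ∑ k ∈ range (M+1), bz i k * (if k = 0 then 0 else bz j (k-1))
      = ∑ k ∈ range M, bz i (k+1) * bz j k := by
    rw [Finset.sum_range_succ']
    simp [mul_comm]
  have C : ∑ k ∈ range (M+1), bz i (k+1) * bz j k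
      = ∑ k ∈ range M, bz i (k+1) * bz j k := by
    rw [Finset.sum_range_succ, bz_eq_zero_of_lt i (M+1) (by omega)]
    ring
  have D : ∑ k ∈ range (M+1), bz i k * bz j (k+1)
      = ∑ k ∈ range M, bz i k * bz j (k+1) := by
    rw [Finset.sum_range_succ, bz_eq_zero_of_lt j (M+1) (by omega)]
    ring
  rw [A, B, C, D]
  ring

open Finset in
lemma bz_sum_eq (i : ℕ) : ∀ j N : ℕ, i + j < N →
    ∑ k ∈ range N, bz i k * bz j k = bz (i+j) 0 := by
  induction i with
  | zero =>
    intro j N hN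
    have : ∀ k ∈ range N, k ≠ 0 → bz 0 k * bz j k = 0 := by
      intro k _ hk
      simp [bz, hk]
    rw [Finset.sum_eq_single_of_mem 0 (by simp; omega) this]
    simp [bz]
  | succ i ih =>
    intro j N hN
    rw [bz_shift i j N (by omega) (by omega), ih (j+1) N (by omega)]
    congr 1
    omega

open Finset in
lemma bz_sum_trunc (i j N₁ N₂ : ℕ) (h1 : i < N₁) (h2 : N₁ ≤ N₂) :
    ∑ k ∈ range N₂, bz i k * bz j k = ∑ k ∈ range N₁, bz i k * bz j k := by
  symm
  apply Finset.sum_subset (Finset.range_subset_range.mpr h2)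
  intro k _ hk
  rw [bz_eq_zero_of_lt i k (by simp at hk; omega)]
  ring

open Finset in
lemma bz_sum_n (i j n : ℕ) (hi : i < n) (hj : j < n) :
    ∑ k ∈ range n, bz i k * bz j k = bz (i+j) 0 := by
  rcases le_or_gt n (i+j+1) with h | h
  · rw [← bz_sum_trunc i j n (i+j+1) hi h, bz_sum_eq i j (i+j+1) (by omega)]
  · exact bz_sum_eq i j n (by omega)

open Finset in
lemma cseq_entry (n i j : ℕ) (hi : i < n) (hj : j < n) :
    cseq (i + j) = ∑ k ∈ range n,
      ((-1:ℤ)^((i-k)/2) * bz i k) * ((-1:ℤ)^k) * ((-1:ℤ)^((j-k)/2) * bz j k) := by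
  rcases Nat.even_or_odd (i + j) with he | ho
  · -- even case
    have hmod : (i + j) % 2 = 0 := Nat.even_iff.mp he
    have term : ∀ k ∈ range n,
        ((-1:ℤ)^((i-k)/2) * bz i k) * ((-1:ℤ)^k) * ((-1:ℤ)^((j-k)/2) * bz j k)
        = (-1:ℤ)^((i+j)/2) * (bz i k * bz j k) := by
      intro k _
      by_cases hik : (i + k) % 2 = 1
      · rw [bz_parity i k hik]; ring
      · by_cases hjk : (j + k) % 2 = 1
        · rw [bz_parity j k hjk]; ring
        · by_cases hki : i < k
          · rw [bz_eq_zero_of_lt i k hki]; ring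
          · by_cases hkj : j < k
            · rw [bz_eq_zero_of_lt j k hkj]; ring
            · have hexp : (i-k)/2 + k + (j-k)/2 = (i+j)/2 := by omega
              calc ((-1:ℤ)^((i-k)/2) * bz i k) * ((-1:ℤ)^k) * ((-1:ℤ)^((j-k)/2) * bz j k)
                  = (-1:ℤ)^((i-k)/2 + k + (j-k)/2) * (bz i k * bz j k) := by
                    rw [pow_add, pow_add]; ring
                _ = (-1:ℤ)^((i+j)/2) * (bz i k * bz j k) := by rw [hexp]
    rw [Finset.sum_congr rfl term, ← Finset.mul_sum, bz_sum_n i j n hi hj]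
    have h2 : i + j = 2 * ((i+j)/2) := by omega
    rw [show bz (i+j) 0 = bz (2 * ((i+j)/2)) 0 by rw [← h2], bz_catalan]
    simp [cseq, hmod]
  · -- odd case
    have ho' : (i + j) % 2 = 1 := Nat.odd_iff.mp ho
    have hmod : ¬ (i + j) % 2 = 0 := by omega
    rw [cseq, if_neg hmod]
    symm
    apply Finset.sum_eq_zero
    intro k _
    rcases Nat.even_or_odd (i + k) with h | h
    · have h' : (i + k) % 2 = 0 := Nat.even_iff.mp h
      have : (j + k) % 2 = 1 := by omega
      rw [bz_parity j k this]; ring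
    · rw [bz_parity i k (Nat.odd_iff.mp h)]; ring

open Matrix in
theorem det_catalan_hankel (n : ℕ) (hn : 1 ≤ n) :
    (∀ p : ℕ, p.Prime →
        ¬ ((p : ℤ) ∣ Matrix.det (fun i j : Fin n => cseq ((i : ℕ) + (j : ℕ))))) ∧
      (Matrix.det (fun i j : Fin n => cseq ((i : ℕ) + (j : ℕ))) = 1 ∨
        Matrix.det (fun i j : Fin n => cseq ((i : ℕ) + (j : ℕ))) = -1) := by
  set Mm : Matrix (Fin n) (Fin n) ℤ :=
    fun i k => (-1:ℤ)^(((i:ℕ)-(k:ℕ))/2) * bz (i:ℕ) (k:ℕ) with hMm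
  set Dm : Matrix (Fin n) (Fin n) ℤ :=
    Matrix.diagonal (fun k : Fin n => (-1:ℤ)^(k:ℕ)) with hDm
  have factor : (fun i j : Fin n => cseq ((i : ℕ) + (j : ℕ))) = Mm * Dm * Mmᵀ := by
    ext i j
    have : (Mm * Dm * Mmᵀ) i j = ∑ k : Fin n,
        ((-1:ℤ)^(((i:ℕ)-(k:ℕ))/2) * bz (i:ℕ) (k:ℕ)) * ((-1:ℤ)^(k:ℕ))
          * ((-1:ℤ)^(((j:ℕ)-(k:ℕ))/2) * bz (j:ℕ) (k:ℕ)) := by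
      rw [Matrix.mul_apply]
      simp only [hMm, hDm, Matrix.mul_diagonal, Matrix.transpose_apply]
      exact Finset.sum_congr rfl (fun x _ => by
        show (Mm * Dm) i x * Mmᵀ x j = _
        rw [hDm, Matrix.mul_diagonal, Matrix.transpose_apply])
    rw [this, Fin.sum_univ_eq_sum_range (fun k : ℕ =>
        ((-1:ℤ)^(((i:ℕ)-k)/2) * bz (i:ℕ) k) * ((-1:ℤ)^k)
          * ((-1:ℤ)^(((j:ℕ)-k)/2) * bz (j:ℕ) k)) n]
    exact cseq_entry n i j i.isLt j.isLt
  have hMtri : Mm.BlockTriangular OrderDual.toDual := by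
    intro a b hab
    have : (a:ℕ) < (b:ℕ) := hab
    rw [hMm]
    simp only
    rw [bz_eq_zero_of_lt _ _ this]
    ring
  have hdetM : Mm.det = 1 := by
    rw [Matrix.det_of_lowerTriangular Mm hMtri]
    apply Finset.prod_eq_one
    intro i _
    rw [hMm]
    simp [bz_diag]
  have hdetD : Dm.det = (-1:ℤ) ^ (∑ k : Fin n, (k:ℕ)) := by
    rw [hDm, Matrix.det_diagonal, Finset.prod_pow_eq_pow_sum]
  have hdet : Matrix.det (fun i j : Fin n => cseq ((i : ℕ) + (j : ℕ)))
      = (-1:ℤ) ^ (∑ k : Fin n, (k:ℕ)) := by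
    rw [factor, Matrix.det_mul, Matrix.det_mul, Matrix.det_transpose, hdetM, hdetD]
    ring
  have hpm : Matrix.det (fun i j : Fin n => cseq ((i : ℕ) + (j : ℕ))) = 1 ∨
      Matrix.det (fun i j : Fin n => cseq ((i : ℕ) + (j : ℕ))) = -1 := by
    rw [hdet]
    exact neg_one_pow_eq_or ℤ _
  refine ⟨?_, hpm⟩
  intro p hp hdvd
  have h1 : (p:ℤ) ∣ 1 := by
    rcases hpm with h | h
    · rwa [h] at hdvd
    · rw [h] at hdvd
      exact (dvd_neg).mp hdvd
  have h2 : (p:ℤ) ≤ 1 := Int.le_of_dvd one_pos h1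
  have h3 : p ≤ 1 := by exact_mod_cast h2
  have := hp.two_le
  omega
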